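/- In the two-source game, if u_1 = 0 and u_2 > 0, then the profile cannot be a Nash equilibrium. -/
import Mathlib


/-- Nash-equilibrium property for the two-source loss network.  Source `s_1` has
`u1` direct users and `v2` users relaying via `s_2`; source `s_2` has `u2` direct
users and `v1` users relaying via `s_1`.  Traffic rates are `T1 = u1 φ + v1 q̄ φ`
and `T2 = u2 φ + v2 q̄ φ` with `q̄ = 1 - q`.  The four conditions state that no
direct user and no relaying user can strictly decrease its loss rate by switching
its route (target traffic adjusted for the deviating user's own flow). -/
noncomputable def NE2 (φ μ q : ℝ) (u1 v1 u2 v2 : ℕ) : Prop :=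
  (0 < u1 →
      φ * ((u1 : ℝ) * φ + (v1 : ℝ) * (1 - q) * φ) /
          ((u1 : ℝ) * φ + (v1 : ℝ) * (1 - q) * φ + μ) ≤
        q * φ + (1 - q) * φ *
            ((u2 : ℝ) * φ + ((v2 : ℝ) + 1) * (1 - q) * φ) /
          ((u2 : ℝ) * φ + ((v2 : ℝ) + 1) * (1 - q) * φ + μ)) ∧
  (0 < v2 →
      q * φ + (1 - q) * φ *
          ((u2 : ℝ) * φ + (v2 : ℝ) * (1 - q) * φ) /
          ((u2 : ℝ) * φ + (v2 : ℝ) * (1 - q) * φ + μ) ≤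
        φ * (((u1 : ℝ) + 1) * φ + (v1 : ℝ) * (1 - q) * φ) /
          (((u1 : ℝ) + 1) * φ + (v1 : ℝ) * (1 - q) * φ + μ)) ∧
  (0 < u2 →
      φ * ((u2 : ℝ) * φ + (v2 : ℝ) * (1 - q) * φ) /
          ((u2 : ℝ) * φ + (v2 : ℝ) * (1 - q) * φ + μ) ≤
        q * φ + (1 - q) * φ *
            ((u1 : ℝ) * φ + ((v1 : ℝ) + 1) * (1 - q) * φ) /
          ((u1 : ℝ) * φ + ((v1 : ℝ) + 1) * (1 - q) * φ + μ)) ∧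
  (0 < v1 →
      q * φ + (1 - q) * φ *
          ((u1 : ℝ) * φ + (v1 : ℝ) * (1 - q) * φ) /
          ((u1 : ℝ) * φ + (v1 : ℝ) * (1 - q) * φ + μ) ≤
        φ * (((u2 : ℝ) + 1) * φ + (v2 : ℝ) * (1 - q) * φ) /
          (((u2 : ℝ) + 1) * φ + (v2 : ℝ) * (1 - q) * φ + μ))

/-- In the two-source game (with `n1 ≥ n2 ≥ 1`, `u1 + v2 = n1`, `u2 + v1 = n2`),
if `u1 = 0` and `u2 > 0`, then the profile cannot be a Nash equilibrium. -/
theorem two_source_not_NE_case1b (φ μ q : ℝ) (hφ : 0 < φ) (hμ : 0 < μ)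
    (hq0 : 0 < q) (hq1 : q < 1) (n1 n2 u1 v1 u2 v2 : ℕ)
    (hn : n2 ≤ n1) (hn2 : 1 ≤ n2) (h1 : u1 + v2 = n1) (h2 : u2 + v1 = n2)
    (hu1 : u1 = 0) (hu2 : 0 < u2) :
    ¬ NE2 φ μ q u1 v1 u2 v2 := by
  rintro ⟨-, hc2, -, -⟩
  have hv2 : 0 < v2 := by omega
  have hv12 : (v1 : ℝ) ≤ v2 := by exact_mod_cast (by omega : v1 ≤ v2)
  have hu2' : (1 : ℝ) ≤ u2 := by exact_mod_cast hu2
  subst hu1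
  specialize hc2 hv2
  set a : ℝ := (u2 : ℝ) * φ + (v2 : ℝ) * (1 - q) * φ with ha
  set b : ℝ := ((0 : ℕ) + 1 : ℝ) * φ + (v1 : ℝ) * (1 - q) * φ with hb
  have hq' : 0 < 1 - q := by linarith
  have hbpos : 0 < b := by
    rw [hb]; push_cast
    nlinarith [mul_nonneg (mul_nonneg (Nat.cast_nonneg v1 : (0:ℝ) ≤ v1) hq'.le) hφ.le]
  have hba : b ≤ a := by
    rw [ha, hb]; push_cast
    nlinarith [mul_nonneg hq'.le hφ.le]
  have hapos : 0 < a := lt_of_lt_of_le hbpos hba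
  have hmono : b / (b + μ) ≤ a / (a + μ) := by
    rw [div_le_div_iff₀ (by linarith) (by linarith)]
    nlinarith
  have hlt : a / (a + μ) < 1 := by
    rw [div_lt_one (by linarith)]; linarith
  -- from hc2 : q*φ + (1-q)*φ*a/(a+μ) ≤ φ*b/(b+μ)
  have h3 : φ * b / (b + μ) ≤ φ * a / (a + μ) := by
    rw [mul_div_assoc, mul_div_assoc]
    exact mul_le_mul_of_nonneg_left hmono hφ.le
  have h4 : q * φ + (1 - q) * φ * a / (a + μ) ≤ φ * a / (a + μ) := le_trans hc2 h3
  rw [mul_div_assoc, mul_div_assoc] at h4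
  nlinarith [mul_pos hq0 hφ, div_nonneg hapos.le (by linarith : (0:ℝ) ≤ a + μ)]
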